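/- Let S be a densely defined, closed, symmetric operator with S ≥ εI, ε > 0, and let v ∈ dom(S_K). Then v decomposes as v = (S_F)⁻¹ S_K v + w with (S_F)⁻¹ S_K v ∈ dom(S) and w ∈ ker(S*). Consequently the reduced Krein–von Neumann operator satisfies (Ŝ_K)⁻¹ = (I − P) (S_F)⁻¹ (I − P), where P is the orthogonal projection onto ker(S_K). -/

import Mathlib

open scoped ComplexInnerProductSpace
open Filter

noncomputable section

variable {H : Type*} [NormedAddCommGroup H] [InnerProductSpace ℂ H] [CompleteSpace H]

/-- The kernel of the adjoint `S*` of a densely defined operator `S`,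
described as `{v | ∀ u ∈ dom S, ⟪S u, v⟫ = 0}`. -/
def adjKerD (S : H →ₗ.[ℂ] H) : Submodule ℂ H where
  carrier := {v | ∀ u : S.domain, ⟪S u, v⟫ = 0}
  add_mem' := by
    intro a b ha hb u
    rw [inner_add_right, ha u, hb u, add_zero]
  zero_mem' := by
    intro u; exact inner_zero_right _
  smul_mem' := by
    intro c a ha u
    rw [inner_smul_right, ha u, mul_zero]

/-- Lemma 2.9: Let `S` be densely defined, closed, symmetric with
`S ≥ ε·I`, `ε > 0`, with Friedrichs extension `S_F` (invertible, bounded inverse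
`Finv = (S_F)⁻¹ ∈ B(H)`) and Krein–von Neumann extension `S_K`
(`dom S_K = dom S ∔ ker S*`, `ker S_K = ker S*`). Then every `v ∈ dom S_K` decomposes as
`v = (S_F)⁻¹ S_K v + w` with `(S_F)⁻¹ S_K v ∈ dom S` and `w ∈ ker S*`; consequently the
reduced Krein–von Neumann operator satisfies `(Ŝ_K)⁻¹ = (I − P) (S_F)⁻¹ (I − P)`, where
`P` is the orthogonal projection onto `ker S_K`: for every `x ∈ (ker S*)ᗮ` there is
`w ∈ ker S*` with `(S_F)⁻¹ x − w ∈ (ker S*)ᗮ ∩ dom S_K` (this element is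
`(I − P)(S_F)⁻¹ x`) and `S_K ((S_F)⁻¹ x − w) = x`. -/
theorem stmt_5 (S S_F S_K : H →ₗ.[ℂ] H)
    (hdense : Dense (S.domain : Set H))
    (hclosed : S.IsClosed)
    (hsym : ∀ u v : S.domain, ⟪S u, (v : H)⟫ = ⟪(u : H), S v⟫)
    (ε : ℝ) (hε : 0 < ε)
    (hbound : ∀ u : S.domain, ε * ‖(u : H)‖ ^ 2 ≤ (⟪(u : H), S u⟫).re)
    (hFext : S ≤ S_F)
    (hFadj : ∀ (v : S_F.domain) (u : S.domain), ⟪S u, (v : H)⟫ = ⟪(u : H), S_F v⟫)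
    (hFbound : ∀ v : S_F.domain, ε * ‖(v : H)‖ ^ 2 ≤ (⟪(v : H), S_F v⟫).re)
    (hKext : S ≤ S_K)
    (hKadj : ∀ (v : S_K.domain) (u : S.domain), ⟪S u, (v : H)⟫ = ⟪(u : H), S_K v⟫)
    (hdomK : S_K.domain = S.domain ⊔ adjKerD S)
    -- `Finv = (S_F)⁻¹ ∈ B(H)`:
    (Finv : H →L[ℂ] H)
    (hFinvmem : ∀ x : H, Finv x ∈ S_F.domain)
    (hFinv1 : ∀ x : H, S_F ⟨Finv x, hFinvmem x⟩ = x)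
    (hFinv2 : ∀ v : S_F.domain, Finv (S_F v) = (v : H)) :
    -- the decomposition `v = (S_F)⁻¹ S_K v + w`, `w ∈ ker S*`:
    (∀ v : S_K.domain, Finv (S_K v) ∈ S.domain ∧ ((v : H) - Finv (S_K v)) ∈ adjKerD S) ∧
    -- `(Ŝ_K)⁻¹ = (I − P)(S_F)⁻¹(I − P)`:
    (∀ x : H, x ∈ (adjKerD S)ᗮ →
      ∃ w ∈ adjKerD S, (Finv x - w) ∈ (adjKerD S)ᗮ ∧
        ∃ hmem : Finv x - w ∈ S_K.domain, S_K ⟨Finv x - w, hmem⟩ = x) := by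

  classical
  have hSdomK : S.domain ≤ S_K.domain := hKext.1
  have hKdomK : adjKerD S ≤ S_K.domain := by rw [hdomK]; exact le_sup_right
  -- S_K vanishes on ker S*
  have hSK0 : ∀ (k : H) (hk : k ∈ adjKerD S), S_K ⟨k, hKdomK hk⟩ = 0 := by
    intro k hk
    refine hdense.eq_zero_of_inner_right ℂ fun v hv => ?_
    rw [← hKadj ⟨k, hKdomK hk⟩ ⟨v, hv⟩]
    exact hk ⟨v, hv⟩
  -- lower norm bound
  have hlow : ∀ u : S.domain, ε * ‖(u : H)‖ ≤ ‖S u‖ := by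
    intro u
    rcases eq_or_lt_of_le (norm_nonneg (u : H)) with h0 | h0
    · simp [← h0]
    have h1 : ε * ‖(u : H)‖ ^ 2 ≤ ‖(u : H)‖ * ‖S u‖ := by
      refine le_trans (hbound u) (le_trans (Complex.re_le_norm _) ?_)
      exact norm_inner_le_norm _ _
    nlinarith
  -- the range of S
  set R : Submodule ℂ H := LinearMap.range S.toFun with hR
  have hRclosed : IsClosed (R : Set H) := by
    rw [← isSeqClosed_iff_isClosed]
    intro f x hf hx
    choose u hu using hf
    have hu' : ∀ n, S (u n) = f n := hu
    have hcau : CauchySeq fun n => ((u n : H)) := by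
      rw [Metric.cauchySeq_iff]
      intro δ hδ
      obtain ⟨N, hN⟩ := Metric.cauchySeq_iff.mp hx.cauchySeq (ε * δ) (by positivity)
      refine ⟨N, fun m hm n hn => ?_⟩
      have h2 := hlow (u m - u n)
      have hmap : S (u m - u n) = f m - f n := by
        rw [S.map_sub, hu', hu']
      rw [hmap] at h2
      have h3 : ‖f m - f n‖ < ε * δ := by
        rw [← dist_eq_norm]; exact hN m hm n hn
      have h4 : ((u m - u n : S.domain) : H) = (u m : H) - (u n : H) := rfl
      rw [h4] at h2
      rw [dist_eq_norm]
      have := lt_of_le_of_lt h2 h3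
      exact (mul_lt_mul_iff_right₀ hε).mp this
    obtain ⟨z, hz⟩ := cauchySeq_tendsto_of_complete hcau
    have hgraph : (z, x) ∈ S.graph := by
      have hcl : _root_.IsClosed (S.graph : Set (H × H)) := hclosed
      refine hcl.mem_of_tendsto (hz.prodMk_nhds hx) ?_
      filter_upwards with n
      have := S.mem_graph (u n)
      rwa [hu' n] at this
    rw [LinearPMap.mem_graph_iff] at hgraph
    obtain ⟨y, hy1, hy2⟩ := hgraph
    exact ⟨y, hy2⟩
  -- adjKerD S = Rᗮ
  have hKR : adjKerD S = Rᗮ := by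
    ext v
    constructor
    · intro hv
      intro w hw
      obtain ⟨a, rfl⟩ := hw
      exact hv a
    · intro hv a
      exact hv (S a) ⟨a, rfl⟩
  have horth : (adjKerD S)ᗮ = R := by
    rw [hKR, Submodule.orthogonal_orthogonal_eq_closure,
      hRclosed.submodule_topologicalClosure_eq]
  have hKclosed : IsClosed ((adjKerD S : Submodule ℂ H) : Set H) := by
    rw [hKR]; exact R.isClosed_orthogonal
  haveI : CompleteSpace (adjKerD S) := hKclosed.completeSpace_coe
  -- key computation : for u ∈ dom S, Finv (S u) = u
  have hFu : ∀ u : S.domain, Finv (S u) = (u : H) := by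
    intro u
    have h1 : S u = S_F ⟨(u : H), hFext.1 u.2⟩ := hFext.2 rfl
    rw [h1, hFinv2]
  constructor
  · intro v
    have hv2 : (v : H) ∈ S.domain ⊔ adjKerD S := by rw [← hdomK]; exact v.2
    obtain ⟨a, ha, k, hk, hak⟩ := Submodule.mem_sup.mp hv2
    have hveq : v = (⟨a, hSdomK ha⟩ : S_K.domain) + ⟨k, hKdomK hk⟩ :=
      Subtype.ext (by simp [← hak])
    have hSa : S ⟨a, ha⟩ = S_K ⟨a, hSdomK ha⟩ := hKext.2 rfl
    have hSKv : S_K v = S ⟨a, ha⟩ := by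
      rw [hveq, S_K.map_add, hSK0 k hk, add_zero, ← hSa]
    rw [hSKv, hFu ⟨a, ha⟩]
    exact ⟨ha, by rw [← hak]; simpa using hk⟩
  · intro x hx
    rw [horth] at hx
    obtain ⟨a, ha⟩ := hx
    obtain ⟨w, hw, z, hzmem, hdec⟩ := (adjKerD S).exists_add_mem_mem_orthogonal (a : H)
    have hFx : Finv x = (a : H) := by rw [← ha]; exact hFu a
    have hfw : Finv x - w = z := by rw [hFx, hdec]; abel
    refine ⟨w, hw, by rw [hfw]; exact hzmem, ?_, ?_⟩
    · rw [hFx]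
      exact sub_mem (hSdomK a.2) (hKdomK hw)
    · have hmem : Finv x - w ∈ S_K.domain := by
        rw [hFx]; exact sub_mem (hSdomK a.2) (hKdomK hw)
      have heq : (⟨Finv x - w, hmem⟩ : S_K.domain) =
          (⟨(a : H), hSdomK a.2⟩ : S_K.domain) - ⟨w, hKdomK hw⟩ :=
        Subtype.ext (by simp [hFx])
      have haK : (a : H) ∈ S_K.domain := hSdomK a.2
      have hSa2 : S a = S_K ⟨(a : H), haK⟩ := hKext.2 rfl
      rw [heq, S_K.map_sub, hSK0 w hw, sub_zero, ← hSa2]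
      exact ha
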